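/- arXiv:1307.6125 — 5 statements merged into one kernel-verified Lean document; each statement's English description precedes it below -/
import Mathlib

section
/- Consider a system of m polynomial equations in n complex variables of the form alpha_i * f_i(x) + g_i(x) = 0 together with the inequations f_i(x) != 0, for i = 1,...,m, where f_i, g_i are fixed polynomials and alpha = (alpha_1,...,alpha_m) is a parameter vector. If the set of parameters alpha in C^m for which the system has a solution x in C^n has positive Lebesgue measure (equivalently, is not contained in the zero set of any nonzero polynomial), then m <= n. -/
open MvPolynomial

lemma finrank_restrictDegree_le (n N : ℕ) :
    Module.finrank ℂ (MvPolynomial.restrictDegree (Fin n) ℂ N) ≤ (N+1)^n := by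
  classical
  set S : Set (Fin n →₀ ℕ) := {s | ∀ i, s i ≤ N} with hS
  have hmem : ∀ s : S, ∀ i, (s : Fin n →₀ ℕ) i ≤ N := fun s => s.2
  have hinj : Function.Injective
      (fun s : S => fun i => (⟨(s : Fin n →₀ ℕ) i, Nat.lt_succ_of_le (hmem s i)⟩ : Fin (N+1))) := by
    intro a b hab
    ext i
    simpa using congrArg Fin.val (congrFun hab i)
  have hfin : Finite S := Finite.of_injective _ hinj
  have : Fintype S := Fintype.ofFinite S
  have hb : Module.finrank ℂ (MvPolynomial.restrictDegree (Fin n) ℂ N) = Fintype.card S :=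
    Module.finrank_eq_card_basis (MvPolynomial.basisRestrictSupport ℂ S)
  rw [hb]
  calc Fintype.card S ≤ Fintype.card (Fin n → Fin (N+1)) := Fintype.card_le_of_injective _ hinj
    _ = (N+1)^n := by simp

lemma pow_ineq_aux {m n C : ℕ} (hn : n < m) (hC : 1 ≤ C) :
    (m * (m*C)^n * C + 1)^n < ((m*C)^n + 1)^m := by
  set D := (m*C)^n with hD
  have hm : 0 < m := Nat.lt_of_le_of_lt (Nat.zero_le n) hn
  have h1 : m*D*C + 1 ≤ m*C*(D+1) := by nlinarith
  calc (m*D*C + 1)^n ≤ (m*C*(D+1))^n := Nat.pow_le_pow_left h1 n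
    _ = D * (D+1)^n := by rw [mul_pow, hD]
    _ < (D+1) * (D+1)^n := by
        have := Nat.pow_pos (n := n) (Nat.succ_pos D)
        exact Nat.mul_lt_mul_of_lt_of_le (Nat.lt_succ_self D) (le_refl _) this
    _ = (D+1)^(n+1) := (pow_succ' _ _).symm
    _ ≤ (D+1)^m := Nat.pow_le_pow_right (Nat.succ_pos D) hn

/-- If, for a set of parameters `α ∈ ℂ^m` not contained in the zero set of any
nonzero polynomial (equivalently, of positive measure), the hybrid system
`α i * f i (x) + g i (x) = 0`, `f i (x) ≠ 0` (`i = 1,…,m`) has a solution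
`x ∈ ℂ^n`, then `m ≤ n`. -/
theorem stmt_1 (m n : ℕ) (f g : Fin m → MvPolynomial (Fin n) ℂ)
    (h : ∀ Q : MvPolynomial (Fin m) ℂ, Q ≠ 0 →
      ∃ α : Fin m → ℂ, MvPolynomial.eval α Q ≠ 0 ∧
        ∃ x : Fin n → ℂ, ∀ i,
          α i * MvPolynomial.eval x (f i) + MvPolynomial.eval x (g i) = 0 ∧
          MvPolynomial.eval x (f i) ≠ 0) :
    m ≤ n := by
  classical
  by_contra hmn
  push_neg at hmn
  -- degree bound
  set C : ℕ := 1 + ∑ i, ((f i).totalDegree + (g i).totalDegree) with hCdef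
  have hC1 : 1 ≤ C := Nat.le_add_right 1 _
  have hCf : ∀ i, (f i).totalDegree ≤ C := by
    intro i
    have : (f i).totalDegree + (g i).totalDegree ≤ ∑ j, ((f j).totalDegree + (g j).totalDegree) :=
      Finset.single_le_sum (f := fun j => (f j).totalDegree + (g j).totalDegree)
        (fun _ _ => Nat.zero_le _) (Finset.mem_univ i)
    omega
  have hCg : ∀ i, (g i).totalDegree ≤ C := by
    intro i
    have : (f i).totalDegree + (g i).totalDegree ≤ ∑ j, ((f j).totalDegree + (g j).totalDegree) :=
      Finset.single_le_sum (f := fun j => (f j).totalDegree + (g j).totalDegree)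
        (fun _ _ => Nat.zero_le _) (Finset.mem_univ i)
    omega
  set D : ℕ := (m * C)^n with hDdef
  set N : ℕ := m * D * C with hNdef
  -- the family of cleared-denominator polynomials
  set T : (Fin m → Fin (D+1)) → MvPolynomial (Fin n) ℂ :=
    fun σ => ∏ i, (-(g i))^(σ i : ℕ) * (f i)^(D - (σ i : ℕ)) with hT
  have hdeg : ∀ σ, (T σ).totalDegree ≤ N := by
    intro σ
    calc (T σ).totalDegree ≤ ∑ i, ((-(g i))^(σ i : ℕ) * (f i)^(D - (σ i : ℕ))).totalDegree :=
          totalDegree_finset_prod _ _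
      _ ≤ ∑ i, (D * C) := by
          apply Finset.sum_le_sum
          intro i _
          have h1 : ((-(g i))^(σ i : ℕ)).totalDegree ≤ (σ i : ℕ) * C := by
            calc ((-(g i))^(σ i : ℕ)).totalDegree ≤ (σ i : ℕ) * (-(g i)).totalDegree :=
                  totalDegree_pow _ _
              _ ≤ (σ i : ℕ) * C := by
                  rw [totalDegree_neg]
                  exact Nat.mul_le_mul_left _ (hCg i)
          have h2 : ((f i)^(D - (σ i : ℕ))).totalDegree ≤ (D - (σ i : ℕ)) * C := by
            calc ((f i)^(D - (σ i : ℕ))).totalDegree ≤ (D - (σ i : ℕ)) * (f i).totalDegree :=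
                  totalDegree_pow _ _
              _ ≤ (D - (σ i : ℕ)) * C := Nat.mul_le_mul_left _ (hCf i)
          calc ((-(g i))^(σ i : ℕ) * (f i)^(D - (σ i : ℕ))).totalDegree
              ≤ ((-(g i))^(σ i : ℕ)).totalDegree + ((f i)^(D - (σ i : ℕ))).totalDegree :=
                totalDegree_mul _ _
            _ ≤ (σ i : ℕ) * C + (D - (σ i : ℕ)) * C := Nat.add_le_add h1 h2
            _ = ((σ i : ℕ) + (D - (σ i : ℕ))) * C := (Nat.add_mul _ _ _).symm
            _ = D * C := by rw [Nat.add_sub_cancel' (Nat.lt_succ_iff.mp (σ i).isLt)]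
      _ = m * D * C := by simp [Finset.sum_const, Nat.mul_assoc]
  have hmemT : ∀ σ, T σ ∈ MvPolynomial.restrictDegree (Fin n) ℂ N := by
    intro σ
    apply MvPolynomial.restrictTotalDegree_le_restrictDegree (Fin n) ℂ N
    rw [MvPolynomial.mem_restrictTotalDegree]
    exact hdeg σ
  -- linear dependence by dimension count
  have hdep : ¬ LinearIndependent ℂ T := by
    intro hli
    set T' : (Fin m → Fin (D+1)) → MvPolynomial.restrictDegree (Fin n) ℂ N :=
      fun σ => ⟨T σ, hmemT σ⟩ with hT'
    have hli' : LinearIndependent ℂ T' := by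
      apply LinearIndependent.of_comp (MvPolynomial.restrictDegree (Fin n) ℂ N).subtype
      exact hli
    have hcard := hli'.fintype_card_le_finrank
    have hcard2 : (D+1)^m ≤ (N+1)^n := by
      calc (D+1)^m = Fintype.card (Fin m → Fin (D+1)) := by simp
        _ ≤ Module.finrank ℂ (MvPolynomial.restrictDegree (Fin n) ℂ N) := hcard
        _ ≤ (N+1)^n := finrank_restrictDegree_le n N
    have := pow_ineq_aux hmn hC1
    rw [← hDdef, ← hNdef] at this
    omega
  rw [Fintype.not_linearIndependent_iff] at hdep
  obtain ⟨c, hsum, σ0, hc0⟩ := hdep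
  -- the exponent map
  set e : (Fin m → Fin (D+1)) → (Fin m →₀ ℕ) :=
    fun σ => Finsupp.equivFunOnFinite.symm (fun i => (σ i : ℕ)) with he
  have heinj : Function.Injective e := by
    intro a b hab
    have := Finsupp.equivFunOnFinite.symm.injective hab
    funext i
    exact Fin.val_injective (congrFun this i)
  -- the polynomial P
  set P : MvPolynomial (Fin m) ℂ := ∑ σ, MvPolynomial.monomial (e σ) (c σ) with hP
  have hPcoeff : ∀ τ, MvPolynomial.coeff (e τ) P = c τ := by
    intro τ
    rw [hP, MvPolynomial.coeff_sum]
    rw [Finset.sum_eq_single τ]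
    · simp [MvPolynomial.coeff_monomial]
    · intro σ _ hστ
      rw [MvPolynomial.coeff_monomial, if_neg (fun hh => hστ (heinj hh))]
    · intro hh; exact absurd (Finset.mem_univ τ) hh
  have hPne : P ≠ 0 := by
    intro hh
    apply hc0
    rw [← hPcoeff σ0, hh, MvPolynomial.coeff_zero]
  obtain ⟨α, hα, x, hx⟩ := h P hPne
  -- evaluate the linear relation at x
  have hFne : ∀ i, MvPolynomial.eval x (f i) ≠ 0 := fun i => (hx i).2
  have hGeq : ∀ i, MvPolynomial.eval x (-(g i)) = α i * MvPolynomial.eval x (f i) := by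
    intro i
    have := (hx i).1
    rw [map_neg]
    linear_combination -this
  have hevalT : ∀ σ, MvPolynomial.eval x (T σ)
      = (∏ i, α i ^ (σ i : ℕ)) * ∏ i, (MvPolynomial.eval x (f i)) ^ D := by
    intro σ
    rw [hT]
    simp only [map_prod, map_mul, map_pow]
    rw [← Finset.prod_mul_distrib]
    apply Finset.prod_congr rfl
    intro i _
    rw [hGeq i, mul_pow, mul_assoc, ← pow_add,
      Nat.add_sub_cancel' (Nat.lt_succ_iff.mp (σ i).isLt)]
  have hevalP : MvPolynomial.eval α P = ∑ σ, c σ * ∏ i, α i ^ (σ i : ℕ) := by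
    rw [hP, map_sum]
    apply Finset.sum_congr rfl
    intro σ _
    rw [MvPolynomial.eval_monomial, Finsupp.prod_fintype _ _ (fun i => pow_zero _)]
    simp [he]
  have hKne : (∏ i, (MvPolynomial.eval x (f i)) ^ D) ≠ 0 :=
    Finset.prod_ne_zero_iff.mpr (fun i _ => pow_ne_zero _ (hFne i))
  have hzero : MvPolynomial.eval α P * (∏ i, (MvPolynomial.eval x (f i)) ^ D) = 0 := by
    have := congrArg (MvPolynomial.eval x) hsum
    rw [map_sum, map_zero] at this
    rw [hevalP, Finset.sum_mul]
    rw [← this]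
    apply Finset.sum_congr rfl
    intro σ _
    rw [MvPolynomial.smul_eq_C_mul, map_mul, MvPolynomial.eval_C, hevalT σ, mul_assoc]
  exact hα (by
    rcases mul_eq_zero.mp hzero with h1 | h1
    · exact h1
    · exact absurd h1 hKne)
end

section
/- If m >= n+1 polynomials f_1,...,f_m in n complex variables have all coefficients generic (i.e., the statement holds for all coefficient tuples outside the zero set of some nonzero polynomial in the coefficients), and each f_k is a nonzero polynomial, then the system f_1(x) = ... = f_m(x) = 0 has no solution x with all coordinates nonzero, i.e., no solution in (C \ {0})^n. -/
open MvPolynomial Finset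
namespace Stmt2Aux
set_option linter.unusedSectionVars false
set_option maxHeartbeats 1600000


variable {σ : Type*} [DecidableEq σ]

/-- Every monomial of `q` is bounded by `γ`. -/
def Bdd (q : MvPolynomial σ ℂ) (γ : σ →₀ ℕ) : Prop :=
  ∀ β ∈ q.support, β ≤ γ

lemma Bdd.mono {q : MvPolynomial σ ℂ} {γ γ' : σ →₀ ℕ} (h : Bdd q γ) (hγ : γ ≤ γ') :
    Bdd q γ' := fun β hβ => (h β hβ).trans hγ

lemma bdd_monomial {β : σ →₀ ℕ} (c : ℂ) {γ} (h : β ≤ γ) : Bdd (monomial β c) γ := by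
  intro β' hβ'
  rcases Finset.mem_singleton.1 (support_monomial_subset hβ') with rfl
  exact h

lemma bdd_one : Bdd (1 : MvPolynomial σ ℂ) 0 := by
  simpa using bdd_monomial (σ := σ) (β := 0) (1 : ℂ) le_rfl

lemma bdd_X_pow (v : σ) (e : ℕ) : Bdd ((X v : MvPolynomial σ ℂ) ^ e) (Finsupp.single v e) := by
  rw [X_pow_eq_monomial]
  exact bdd_monomial 1 le_rfl

lemma Bdd.neg {q : MvPolynomial σ ℂ} {γ} (h : Bdd q γ) : Bdd (-q) γ := by
  intro β hβ
  rw [MvPolynomial.support_neg] at hβ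
  exact h β hβ

lemma Bdd.mul {q₁ q₂ : MvPolynomial σ ℂ} {γ₁ γ₂} (h₁ : Bdd q₁ γ₁) (h₂ : Bdd q₂ γ₂) :
    Bdd (q₁ * q₂) (γ₁ + γ₂) := by
  intro β hβ
  have := MvPolynomial.support_mul q₁ q₂ hβ
  rw [Finset.mem_add] at this
  obtain ⟨b, hb, c, hc, rfl⟩ := this
  exact add_le_add (h₁ b hb) (h₂ c hc)

lemma Bdd.pow {q : MvPolynomial σ ℂ} {γ} (h : Bdd q γ) (e : ℕ) : Bdd (q ^ e) (e • γ) := by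
  induction e with
  | zero => simpa using bdd_one
  | succ e ih =>
      rw [pow_succ, succ_nsmul]
      exact ih.mul h

lemma bdd_sum {I : Type*} (s : Finset I) (f : I → MvPolynomial σ ℂ) {γ}
    (h : ∀ i ∈ s, Bdd (f i) γ) : Bdd (∑ i ∈ s, f i) γ := by
  intro β hβ
  have := MvPolynomial.support_sum hβ
  rw [Finset.mem_biUnion] at this
  obtain ⟨i, hi, hβi⟩ := this
  exact h i hi β hβi

lemma bdd_prod {I : Type*} (s : Finset I) (f : I → MvPolynomial σ ℂ) (γ : I → σ →₀ ℕ)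
    (h : ∀ i ∈ s, Bdd (f i) (γ i)) : Bdd (∏ i ∈ s, f i) (∑ i ∈ s, γ i) := by
  classical
  induction s using Finset.induction_on with
  | empty => simpa using bdd_one
  | @insert a s ha ih =>
      rw [Finset.prod_insert ha, Finset.sum_insert ha]
      exact (h a (mem_insert_self a s)).mul (ih fun i hi => h i (mem_insert_of_mem hi))


/-- A family of monomially bounded polynomials that is larger than the number of
available monomials has a nontrivial linear relation. -/
lemma exists_relation {A : Type*} [Fintype A] (v : A → MvPolynomial σ ℂ) (γ : σ →₀ ℕ)
    (hb : ∀ a, Bdd (v a) γ) (hcard : (Finset.Iic γ).card < Fintype.card A) :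
    ∃ g : A → ℂ, ∑ a, g a • v a = 0 ∧ ∃ a, g a ≠ 0 := by
  classical
  rw [← Fintype.not_linearIndependent_iff]
  intro hli
  set s : Finset (MvPolynomial σ ℂ) := (Finset.Iic γ).image (fun β => monomial β 1) with hs
  have hmem : ∀ a, v a ∈ Submodule.span ℂ (s : Set (MvPolynomial σ ℂ)) := by
    intro a
    rw [(v a).as_sum]
    refine Submodule.sum_mem _ fun β hβ => ?_
    have h1 : monomial β (1 : ℂ) ∈ Submodule.span ℂ (s : Set (MvPolynomial σ ℂ)) := by
      apply Submodule.subset_span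
      rw [Finset.mem_coe, hs, Finset.mem_image]
      exact ⟨β, Finset.mem_Iic.2 (hb a β hβ), rfl⟩
    have := Submodule.smul_mem _ (coeff β (v a)) h1
    rwa [smul_monomial, smul_eq_mul, mul_one] at this
  set W := Submodule.span ℂ (s : Set (MvPolynomial σ ℂ))
  have : FiniteDimensional ℂ W := FiniteDimensional.span_finset ℂ s
  have hli' : LinearIndependent ℂ (fun a => (⟨v a, hmem a⟩ : W)) :=
    hli.of_comp W.subtype
  have h1 : Fintype.card A ≤ Module.finrank ℂ W := hli'.fintype_card_le_finrank
  have h2 : Module.finrank ℂ W ≤ s.card := finrank_span_finset_le_card s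
  have h3 : s.card ≤ (Finset.Iic γ).card := Finset.card_image_le
  omega

lemma card_Iic_le (γ : σ →₀ ℕ) (K r : ℕ) (hK : ∀ w, γ w ≤ K) (hr : γ.support.card ≤ r) :
    (Finset.Iic γ).card ≤ (K + 1) ^ r := by
  classical
  rw [Finsupp.card_Iic]
  calc ∏ i ∈ γ.support, (Finset.Iic (γ i)).card
      ≤ ∏ _i ∈ γ.support, (K + 1) := by
        refine Finset.prod_le_prod (fun _ _ => Nat.zero_le _) (fun i _ => ?_)
        rw [Nat.card_Iic]
        exact Nat.succ_le_succ (hK i)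
    _ = (K + 1) ^ γ.support.card := by rw [Finset.prod_const]
    _ ≤ (K + 1) ^ r := Nat.pow_le_pow_right (Nat.succ_le_succ (Nat.zero_le _)) hr


end Stmt2Aux
namespace Stmt2Aux



abbrev Idx (n m : ℕ) := Fin m × (Fin n →₀ ℕ)
abbrev Vars (n m : ℕ) := Idx n m ⊕ Fin n

/-- the monomial x^d -/
noncomputable def mu (m : ℕ) (d : Fin n →₀ ℕ) : MvPolynomial (Vars n m) ℂ :=
  ∏ j, (X (Sum.inr j)) ^ d j

lemma mu_add (a b : Fin n →₀ ℕ) : mu m (a + b) = mu m a * mu m b := by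
  rw [mu, mu, mu, ← Finset.prod_mul_distrib]
  refine Finset.prod_congr rfl fun j _ => ?_
  rw [Finsupp.add_apply, pow_add]

lemma eval_mu (c : Idx n m → ℂ) (x : Fin n → ℂ) (d : Fin n →₀ ℕ) :
    eval (Sum.elim c x) (mu m d) = ∏ j, x j ^ d j := by
  rw [mu]
  simp

/-- exponent bound vector for x-monomials -/
noncomputable def gam (m : ℕ) (d : Fin n →₀ ℕ) : Vars n m →₀ ℕ :=
  ∑ j, Finsupp.single (Sum.inr j : Vars n m) (d j)

lemma gam_apply_inl (d : Fin n →₀ ℕ) (i : Idx n m) : gam m d (Sum.inl i) = 0 := by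
  rw [gam, Finsupp.finset_sum_apply]
  refine Finset.sum_eq_zero fun j _ => ?_
  simp [Finsupp.single_apply]

lemma gam_apply_inr (d : Fin n →₀ ℕ) (j : Fin n) : gam m (d) (Sum.inr j) = d j := by
  rw [gam, Finsupp.finset_sum_apply]
  rw [Finset.sum_eq_single j (fun b _ hb => by simp [Finsupp.single_apply, hb]) (by simp)]
  simp

lemma gam_mono {d d' : Fin n →₀ ℕ} (h : d ≤ d') : gam m d ≤ gam m d' := by
  intro w
  cases w with
  | inl i => simp [gam_apply_inl]
  | inr j => rw [gam_apply_inr, gam_apply_inr]; exact h j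


variable {n m : ℕ}



variable (S : Fin m → Finset (Fin n →₀ ℕ)) (dk : Fin m → (Fin n →₀ ℕ))

noncomputable def Sig : Fin n →₀ ℕ := ∑ k, ∑ d ∈ S k, d

noncomputable def tau (k : Fin m) : Fin n →₀ ℕ := ∑ k' ∈ univ.erase k, dk k'

lemma mem_le_Sig {k : Fin m} {d : Fin n →₀ ℕ} (hd : d ∈ S k) : d ≤ Sig S := by
  calc d ≤ ∑ d' ∈ S k, d' :=
        Finset.single_le_sum (f := fun d' => d') (fun _ _ => zero_le) hd
    _ ≤ Sig S := Finset.single_le_sum (f := fun k => ∑ d' ∈ S k, d') (fun _ _ => zero_le)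
        (mem_univ k)

lemma tau_le_Sig (hdk : ∀ k, dk k ∈ S k) (k : Fin m) : tau dk k ≤ Sig S := by
  calc tau dk k ≤ ∑ k', dk k' :=
        Finset.sum_le_sum_of_subset (Finset.erase_subset _ _)
    _ ≤ Sig S := Finset.sum_le_sum fun k' _ =>
        Finset.single_le_sum (f := fun d' => d') (fun _ _ => zero_le) (hdk k')

lemma dksum_le_Sig (hdk : ∀ k, dk k ∈ S k) : (∑ k, dk k) ≤ Sig S :=
  Finset.sum_le_sum fun k' _ =>
    Finset.single_le_sum (f := fun d' => d') (fun _ _ => zero_le) (hdk k')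

noncomputable def DD : ℕ := 2 * ((Sig S).sum fun _ e => e) + 1

lemma one_le_DD : 1 ≤ DD S := Nat.le_add_left 1 _

lemma apply_le_of_le_Sig {f : Fin n →₀ ℕ} (hf : f ≤ Sig S) (j : Fin n) :
    f j ≤ (Sig S).sum fun _ e => e := by
  refine (hf j).trans ?_
  by_cases hj : j ∈ (Sig S).support
  · exact Finset.single_le_sum (f := fun j' => (Sig S) j') (fun _ _ => zero_le) hj
  · rw [Finsupp.notMem_support_iff.1 hj]; exact zero_le




variable (S : Fin m → Finset (Fin n →₀ ℕ)) (dk : Fin m → (Fin n →₀ ℕ))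

noncomputable def sden : MvPolynomial (Vars n m) ℂ := mu m (∑ k, dk k)

noncomputable def G (k : Fin m) : MvPolynomial (Vars n m) ℂ :=
  ∑ d ∈ (S k).erase (dk k), X (Sum.inl (k, d)) * mu m d

noncomputable def pp (i : Idx n m) : MvPolynomial (Vars n m) ℂ :=
  if i.2 = dk i.1 then -(G S dk i.1 * mu m (tau dk i.1)) else X (Sum.inl i) * sden dk

lemma dk_add_tau (k : Fin m) : dk k + tau dk k = ∑ k', dk k' := by
  rw [tau, Finset.add_sum_erase _ _ (mem_univ k)]

/-- Key evaluation identity: if `(c, x)` solves the system, then `p_i` evaluates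
to `c i * s` where `s` is the common denominator monomial. -/
lemma eval_pp (hdk : ∀ k, dk k ∈ S k) (c : Idx n m → ℂ) (x : Fin n → ℂ)
    (heq : ∀ k, ∑ d ∈ S k, c (k, d) * ∏ j, x j ^ d j = 0)
    (i : Idx n m) (hi : i.2 ∈ S i.1) :
    eval (Sum.elim c x) (pp S dk i) = c i * eval (Sum.elim c x) (sden dk) := by
  obtain ⟨k, d⟩ := i
  simp only at hi ⊢
  by_cases hpiv : d = dk k
  · subst hpiv
    have hpp : pp S dk (k, dk k) = -(G S dk k * mu m (tau dk k)) := by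
      rw [pp]; simp
    rw [hpp]
    have hsplit := Finset.add_sum_erase (S k) (fun d => c (k, d) * ∏ j, x j ^ d j) hi
    rw [heq k] at hsplit
    -- hsplit : c (k, d) * ∏ j, x j ^ d j + ∑ d' in erase ... = 0
    have hG : eval (Sum.elim c x) (G S dk k) =
        ∑ d' ∈ (S k).erase (dk k), c (k, d') * ∏ j, x j ^ d' j := by
      rw [G]
      simp [eval_mu]
    rw [map_neg, map_mul, hG, eval_mu]
    have h2 : ∑ d' ∈ (S k).erase (dk k), c (k, d') * ∏ j, x j ^ d' j
        = - (c (k, dk k) * ∏ j, x j ^ (dk k) j) := by linear_combination hsplit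
    rw [h2, sden, ← dk_add_tau dk k, mu_add, map_mul, eval_mu, eval_mu]
    ring
  · rw [pp]
    simp only [if_neg hpiv]
    rw [map_mul, eval_X, Sum.elim_inl]


noncomputable def FF : Finset (Idx n m) := univ.biUnion fun k => (S k).image fun d => (k, d)

lemma mem_FF {i : Idx n m} (hi : i.2 ∈ S i.1) : i ∈ FF S := by
  rw [FF, Finset.mem_biUnion]
  exact ⟨i.1, mem_univ _, Finset.mem_image.2 ⟨i.2, hi, by cases i; rfl⟩⟩

noncomputable def PP : Finset (Idx n m) := univ.image fun k => (k, dk k)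

noncomputable def VV : Finset (Vars n m) :=
  ((FF S \ PP dk).image Sum.inl) ∪ (univ.image Sum.inr)

lemma inr_mem_VV (j : Fin n) : (Sum.inr j : Vars n m) ∈ VV S dk :=
  Finset.mem_union_right _ (Finset.mem_image.2 ⟨j, mem_univ _, rfl⟩)

lemma inl_mem_VV {i : Idx n m} (hi : i.2 ∈ S i.1) (hpiv : i.2 ≠ dk i.1) :
    (Sum.inl i : Vars n m) ∈ VV S dk := by
  refine Finset.mem_union_left _ (Finset.mem_image.2 ⟨i, ?_, rfl⟩)
  rw [Finset.mem_sdiff]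
  refine ⟨mem_FF S hi, fun hP => ?_⟩
  rw [PP, Finset.mem_image] at hP
  obtain ⟨k, -, hk⟩ := hP
  apply hpiv
  rw [← hk]

noncomputable def kap0 : Vars n m →₀ ℕ := ∑ v ∈ VV S dk, Finsupp.single v (DD S)

lemma kap0_apply (w : Vars n m) : kap0 S dk w = if w ∈ VV S dk then DD S else 0 := by
  rw [kap0, Finsupp.finset_sum_apply]
  rw [Finset.sum_congr rfl (fun v _ => Finsupp.single_apply (a := v) (b := DD S) (a' := w))]
  exact Finset.sum_ite_eq' (VV S dk) w fun _ => DD S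

lemma le_kap0 {ξ : Vars n m →₀ ℕ} (h1 : ∀ w, ξ w ≤ DD S)
    (h2 : ∀ w, w ∉ VV S dk → ξ w = 0) : ξ ≤ kap0 S dk := by
  intro w
  rw [kap0_apply]
  by_cases hw : w ∈ VV S dk
  · rw [if_pos hw]; exact h1 w
  · rw [if_neg hw, h2 w hw]

lemma bdd_mu' (d : Fin n →₀ ℕ) : Bdd (mu m d) (gam m d) := by
  rw [mu, gam]
  exact bdd_prod _ _ _ fun j _ => bdd_X_pow _ _

lemma bdd_sden (hdk : ∀ k, dk k ∈ S k) : Bdd (sden dk) (kap0 S dk) := by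
  refine (bdd_mu' _).mono (le_kap0 S dk ?_ ?_)
  · intro w
    cases w with
    | inl i => rw [gam_apply_inl]; exact zero_le
    | inr j =>
        rw [gam_apply_inr, DD]
        have := apply_le_of_le_Sig S (dksum_le_Sig S dk hdk) j
        omega
  · intro w hw
    cases w with
    | inl i => rw [gam_apply_inl]
    | inr j => exact absurd (inr_mem_VV S dk j) hw

lemma bdd_X (v : Vars n m) : Bdd (X v : MvPolynomial (Vars n m) ℂ) (Finsupp.single v 1) := by
  have := bdd_X_pow (σ := Vars n m) v 1
  rwa [pow_one] at this

lemma singles_apply_le (k : Fin m) (s : Finset (Fin n →₀ ℕ)) (w : Vars n m) :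
    ((∑ d ∈ s, Finsupp.single (Sum.inl (k, d) : Vars n m) 1) w ≤ 1) ∧
    ((∑ d ∈ s, Finsupp.single (Sum.inl (k, d) : Vars n m) 1) w ≠ 0 →
      ∃ d ∈ s, w = Sum.inl (k, d)) := by
  rw [Finsupp.finset_sum_apply]
  cases w with
  | inr j =>
      rw [Finset.sum_eq_zero fun d _ => ?_]
      · exact ⟨zero_le, fun h => absurd rfl h⟩
      · rw [Finsupp.single_apply, if_neg (by simp)]
  | inl i =>
      obtain ⟨k', d'⟩ := i
      by_cases hk : k = k'
      · subst hk
        rw [Finset.sum_congr rfl (fun d _ => ?_), Finset.sum_ite_eq' s d' fun _ => 1]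
        swap
        · rw [Finsupp.single_apply]
          congr 1
          simp [Prod.ext_iff, eq_comm]
        by_cases hd : d' ∈ s
        · rw [if_pos hd]
          exact ⟨le_rfl, fun _ => ⟨d', hd, rfl⟩⟩
        · rw [if_neg hd]
          exact ⟨zero_le, fun h => absurd rfl h⟩
      · rw [Finset.sum_eq_zero fun d _ => ?_]
        · exact ⟨zero_le, fun h => absurd rfl h⟩
        · rw [Finsupp.single_apply, if_neg (by simp [Prod.ext_iff]; tauto)]

lemma bdd_pp (hdk : ∀ k, dk k ∈ S k) {i : Idx n m} (hi : i.2 ∈ S i.1) :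
    Bdd (pp S dk i) (kap0 S dk) := by
  obtain ⟨k, d⟩ := i
  by_cases hpiv : d = dk k
  · subst hpiv
    have hpp : pp S dk (k, dk k) = -(G S dk k * mu m (tau dk k)) := by rw [pp]; simp
    rw [hpp]
    have hG : Bdd (G S dk k)
        ((∑ d ∈ (S k).erase (dk k), Finsupp.single (Sum.inl (k, d) : Vars n m) 1) +
          gam m (Sig S)) := by
      rw [G]
      refine bdd_sum _ _ fun d hd => ((bdd_X _).mul (bdd_mu' _)).mono ?_
      exact add_le_add
        (Finset.single_le_sum (f := fun d => Finsupp.single (Sum.inl (k, d) : Vars n m) 1)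
          (fun _ _ => zero_le) hd)
        (gam_mono (mem_le_Sig S (Finset.mem_of_mem_erase hd)))
    refine (hG.mul (bdd_mu' _)).neg.mono (le_kap0 S dk ?_ ?_)
    · intro w
      obtain ⟨h1, -⟩ := singles_apply_le (n := n) (m := m) k ((S k).erase (dk k)) w
      cases w with
      | inl i =>
          rw [Finsupp.add_apply, Finsupp.add_apply, gam_apply_inl, gam_apply_inl]
          have := one_le_DD S
          omega
      | inr j =>
          rw [Finsupp.add_apply, Finsupp.add_apply, gam_apply_inr, gam_apply_inr]
          have h2 := apply_le_of_le_Sig S le_rfl j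
          have h3 := apply_le_of_le_Sig S (tau_le_Sig S dk hdk k) j
          have h4 : (∑ d ∈ (S k).erase (dk k),
              Finsupp.single (Sum.inl (k, d) : Vars n m) 1) (Sum.inr j) = 0 := by
            rw [Finsupp.finset_sum_apply]
            refine Finset.sum_eq_zero fun d _ => ?_
            rw [Finsupp.single_apply, if_neg (by simp)]
          rw [h4, DD]
          omega
    · intro w hw
      obtain ⟨-, h2⟩ := singles_apply_le (n := n) (m := m) k ((S k).erase (dk k)) w
      cases w with
      | inr j => exact absurd (inr_mem_VV S dk j) hw
      | inl i =>
          rw [Finsupp.add_apply, Finsupp.add_apply, gam_apply_inl, gam_apply_inl]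
          by_cases hz : (∑ d ∈ (S k).erase (dk k),
              Finsupp.single (Sum.inl (k, d) : Vars n m) 1) (Sum.inl i) = 0
          · omega
          · obtain ⟨d, hd, hdi⟩ := h2 hz
            rw [Finset.mem_erase] at hd
            exact absurd (hdi ▸ inl_mem_VV S dk (i := (k, d)) hd.2 hd.1) hw
  · have hpp : pp S dk (k, d) = X (Sum.inl (k, d)) * sden dk := by
      rw [pp, if_neg hpiv]
    rw [hpp, sden]
    refine ((bdd_X _).mul (bdd_mu' _)).mono (le_kap0 S dk ?_ ?_)
    · intro w
      cases w with
      | inl i =>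
          rw [Finsupp.add_apply, gam_apply_inl, Finsupp.single_apply]
          have := one_le_DD S
          split <;> omega
      | inr j =>
          rw [Finsupp.add_apply, gam_apply_inr, Finsupp.single_apply, if_neg (by simp), DD]
          have := apply_le_of_le_Sig S (dksum_le_Sig S dk hdk) j
          omega
    · intro w hw
      cases w with
      | inr j => exact absurd (inr_mem_VV S dk j) hw
      | inl i =>
          rw [Finsupp.add_apply, gam_apply_inl, Finsupp.single_apply]
          rw [if_neg]
          intro hii
          rw [Sum.inl.injEq] at hii
          exact hw (hii ▸ inl_mem_VV S dk hi hpiv)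


lemma of_mem_FF {i : Idx n m} (hi : i ∈ FF S) : i.2 ∈ S i.1 := by
  rw [FF, Finset.mem_biUnion] at hi
  obtain ⟨k, -, hk⟩ := hi
  rw [Finset.mem_image] at hk
  obtain ⟨d, hd, rfl⟩ := hk
  exact hd

lemma PP_subset_FF (hdk : ∀ k, dk k ∈ S k) : PP dk ⊆ FF S := by
  intro i hi
  rw [PP, Finset.mem_image] at hi
  obtain ⟨k, -, rfl⟩ := hi
  exact mem_FF S (hdk k)

lemma card_PP : (PP dk).card = m := by
  rw [PP, Finset.card_image_of_injective _ (fun a b hab => (Prod.ext_iff.1 hab).1),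
    Finset.card_univ, Fintype.card_fin]

lemma card_VV_le (hdk : ∀ k, dk k ∈ S k) (hm : n + 1 ≤ m) :
    (VV S dk).card ≤ (FF S).card - 1 := by
  have h1 : (VV S dk).card ≤ ((FF S).card - m) + n := by
    calc (VV S dk).card ≤ ((FF S \ PP dk).image Sum.inl).card +
          ((univ : Finset (Fin n)).image Sum.inr).card := by
          rw [VV]; exact Finset.card_union_le _ _
      _ ≤ ((FF S).card - m) + n := by
          refine Nat.add_le_add ?_ ?_
          · refine (Finset.card_image_le).trans ?_
            rw [Finset.card_sdiff_of_subset (PP_subset_FF S dk hdk), card_PP]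
          · refine (Finset.card_image_le).trans ?_
            rw [Finset.card_univ, Fintype.card_fin]
  have h2 : m ≤ (FF S).card := by
    have := Finset.card_le_card (PP_subset_FF S dk hdk)
    rwa [card_PP] at this
  omega

lemma prod_X_pow {I σ' : Type*} [DecidableEq σ'] (s : Finset I) (φ : I → σ') (e : I → ℕ) :
    (∏ i ∈ s, (X (φ i) : MvPolynomial σ' ℂ) ^ e i) =
      monomial (∑ i ∈ s, Finsupp.single (φ i) (e i)) 1 := by
  classical
  induction s using Finset.induction_on with
  | empty => simp
  | @insert a s ha ih =>
      rw [Finset.prod_insert ha, Finset.sum_insert ha, ih, X_pow_eq_monomial,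
        monomial_mul, mul_one]


end Stmt2Aux

set_option maxHeartbeats 1600000
set_option linter.unusedSectionVars false

open MvPolynomial Finset Stmt2Aux

/-- A generic overdetermined polynomial system (`m ≥ n+1` nonzero polynomials in
`n` variables, with generic coefficients on prescribed nonempty monomial
supports) has no solution in `(ℂ \ {0})^n`. -/
theorem stmt_2 (n m : ℕ) (hm : n + 1 ≤ m) (S : Fin m → Finset (Fin n →₀ ℕ))
    (hS : ∀ k, (S k).Nonempty) :
    ∃ Q : MvPolynomial (Fin m × (Fin n →₀ ℕ)) ℂ, Q ≠ 0 ∧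
      ∀ c : Fin m × (Fin n →₀ ℕ) → ℂ, MvPolynomial.eval c Q ≠ 0 →
        ¬ ∃ x : Fin n → ℂ, (∀ j, x j ≠ 0) ∧
          ∀ k, ∑ d ∈ S k, c (k, d) * ∏ j, x j ^ d j = 0 := by
  classical
  choose dk hdk using hS
  set N := (FF S).card with hN
  have hmN : m ≤ N := by
    have := Finset.card_le_card (PP_subset_FF S dk hdk)
    rwa [card_PP] at this
  have hN1 : 1 ≤ N := le_trans (by omega) hmN
  set D := DD S with hD
  have hD1 : 1 ≤ D := one_le_DD S
  set t := (2 * D * N) ^ (N - 1) + 1 with ht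
  have ht1 : 1 ≤ t := Nat.le_add_left 1 _
  set kap : Stmt2Aux.Vars n m →₀ ℕ := (N * t) • kap0 S dk with hkap
  set v : (↥(FF S) → Fin t) → MvPolynomial (Stmt2Aux.Vars n m) ℂ :=
    fun α => (∏ i : ↥(FF S), pp S dk (i : Idx n m) ^ (α i : ℕ)) *
      sden dk ^ (N * t - ∑ i : ↥(FF S), (α i : ℕ)) with hv
  have hv' : ∀ α, v α = (∏ i : ↥(FF S), pp S dk (i : Idx n m) ^ (α i : ℕ)) *
      sden dk ^ (N * t - ∑ i : ↥(FF S), (α i : ℕ)) := fun α => rfl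
  have hsum : ∀ α : ↥(FF S) → Fin t, ∑ i, (α i : ℕ) ≤ N * t := by
    intro α
    calc ∑ i, (α i : ℕ) ≤ ∑ _i : ↥(FF S), t :=
          Finset.sum_le_sum fun i _ => le_of_lt (α i).isLt
      _ = N * t := by rw [Finset.sum_const, Finset.card_univ, Fintype.card_coe, smul_eq_mul]
  have hbdd : ∀ α, Bdd (v α) kap := by
    intro α
    have h1 := bdd_prod univ (fun i : ↥(FF S) => pp S dk (↑i : Idx n m) ^ (α i : ℕ))
      (fun i => (α i : ℕ) • kap0 S dk)
      (fun i _ => (bdd_pp S dk hdk (of_mem_FF S i.2)).pow _)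
    rw [← Finset.sum_smul] at h1
    have h2 := (bdd_sden S dk hdk).pow (N * t - ∑ i, (α i : ℕ))
    have h3 := h1.mul h2
    rw [hv' α]
    refine h3.mono (le_of_eq ?_)
    rw [← add_smul, Nat.add_sub_cancel' (hsum α), hkap]
  have hIic : (Finset.Iic kap).card < Fintype.card (↥(FF S) → Fin t) := by
    have hcardA : Fintype.card (↥(FF S) → Fin t) = t ^ N := by
      rw [Fintype.card_fun, Fintype.card_fin, Fintype.card_coe]
    have h1 : (Finset.Iic kap).card ≤ (N * t * D + 1) ^ (N - 1) := by
      refine card_Iic_le kap (N * t * D) (N - 1) ?_ ?_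
      · intro w
        rw [hkap, Finsupp.smul_apply, smul_eq_mul, kap0_apply]
        split
        · rw [hD]
        · simp
      · refine le_trans (Finset.card_le_card ?_) (card_VV_le S dk hdk hm)
        intro w hw
        rw [Finsupp.mem_support_iff] at hw
        rw [hkap, Finsupp.smul_apply, smul_eq_mul, kap0_apply] at hw
        by_contra hwV
        rw [if_neg hwV, mul_zero] at hw
        exact hw rfl
    have h2 : (N * t * D + 1) ^ (N - 1) < t ^ N := by
      calc (N * t * D + 1) ^ (N - 1) ≤ (2 * D * N * t) ^ (N - 1) := by
            refine Nat.pow_le_pow_left ?_ _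
            have h1 : 1 ≤ N * t * D :=
              le_trans (by norm_num) (Nat.mul_le_mul (Nat.mul_le_mul hN1 ht1) hD1)
            calc N * t * D + 1 ≤ N * t * D + N * t * D := by omega
              _ = 2 * D * N * t := by ring
        _ = (2 * D * N) ^ (N - 1) * t ^ (N - 1) := by rw [mul_pow]
        _ < t * t ^ (N - 1) := by
            refine Nat.mul_lt_mul_of_lt_of_le ?_ le_rfl ?_
            · omega
            · exact Nat.pow_pos (by omega)
        _ = t ^ N := by
            rw [← pow_succ']
            congr 1
            omega
    rw [hcardA]
    omega
  obtain ⟨g, hrel, α₀, hg0⟩ := exists_relation v kap hbdd hIic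
  set bet : (↥(FF S) → Fin t) → ((Idx n m) →₀ ℕ) :=
    fun α => ∑ i : ↥(FF S), Finsupp.single (i : Idx n m) (α i : ℕ) with hbet
  have hbet_apply : ∀ α (i : ↥(FF S)), bet α (i : Idx n m) = (α i : ℕ) := by
    intro α i
    rw [hbet]
    simp only
    rw [Finsupp.finset_sum_apply]
    rw [Finset.sum_congr rfl fun i' _ => Finsupp.single_apply]
    simp only [Subtype.coe_inj]
    rw [Finset.sum_ite_eq' univ i fun i' => ((α i' : ℕ))]
    simp
  have hbet_inj : Function.Injective bet := by
    intro α α' hαα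
    funext i
    have h1 := hbet_apply α i
    have h2 := hbet_apply α' i
    rw [hαα] at h1
    exact Fin.val_injective (h1 ▸ h2 ▸ rfl)
  have hmono : ∀ α : ↥(FF S) → Fin t,
      (C (g α) * ∏ i : ↥(FF S), (X (i : Idx n m) : MvPolynomial (Idx n m) ℂ) ^ (α i : ℕ))
        = monomial (bet α) (g α) := by
    intro α
    rw [prod_X_pow univ (fun i : ↥(FF S) => (i : Idx n m)) (fun i => (α i : ℕ)),
      C_mul_monomial, mul_one, hbet]
  refine ⟨∑ α, C (g α) * ∏ i : ↥(FF S), X (i : Idx n m) ^ (α i : ℕ), ?_, ?_⟩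
  · -- nonzero
    intro hQ
    have hco := congrArg (coeff (bet α₀)) hQ
    rw [coeff_zero, coeff_sum] at hco
    rw [Finset.sum_congr rfl fun α _ => by rw [hmono α, coeff_monomial]] at hco
    rw [Finset.sum_eq_single α₀ (fun α _ hne => if_neg fun h => hne (hbet_inj h))
      (fun h => absurd (mem_univ α₀) h), if_pos rfl] at hco
    exact hg0 hco
  · rintro c hQc ⟨x, hx, heqs⟩
    set es := eval (Sum.elim c x) (sden dk) with hes
    have hes0 : es ≠ 0 := by
      rw [hes, sden, eval_mu]
      exact Finset.prod_ne_zero_iff.2 fun j _ => pow_ne_zero _ (hx j)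
    have hevpp : ∀ i : ↥(FF S),
        eval (Sum.elim c x) (pp S dk (i : Idx n m)) = c (i : Idx n m) * es :=
      fun i => eval_pp S dk hdk c x heqs _ (of_mem_FF S i.2)
    have hev : ∀ α, eval (Sum.elim c x) (v α) =
        (∏ i : ↥(FF S), c (i : Idx n m) ^ (α i : ℕ)) * es ^ (N * t) := by
      intro α
      have hNt : (∑ i : ↥(FF S), (α i : ℕ)) + (N * t - ∑ i : ↥(FF S), (α i : ℕ)) = N * t :=
        Nat.add_sub_cancel' (hsum α)
      rw [hv' α, map_mul, map_prod, map_pow]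
      rw [Finset.prod_congr rfl fun i _ => by rw [map_pow, hevpp i]]
      rw [Finset.prod_congr rfl fun (i : ↥(FF S)) _ => mul_pow (c (i : Idx n m)) es (α i : ℕ),
        Finset.prod_mul_distrib, Finset.prod_pow_eq_pow_sum, mul_assoc, ← pow_add, hNt]
    have h0 : (∑ α, g α * ((∏ i : ↥(FF S), c (i : Idx n m) ^ (α i : ℕ)) * es ^ (N * t))) = 0 := by
      have hh := congrArg (eval (Sum.elim c x)) hrel
      rw [map_zero, map_sum] at hh
      rw [← hh]
      refine Finset.sum_congr rfl fun α _ => ?_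
      rw [smul_eq_C_mul, map_mul, eval_C, hev α]
    have hQeval : eval c (∑ α, C (g α) * ∏ i : ↥(FF S), X (i : Idx n m) ^ (α i : ℕ))
        = ∑ α, g α * ∏ i : ↥(FF S), c (i : Idx n m) ^ (α i : ℕ) := by
      rw [map_sum]
      refine Finset.sum_congr rfl fun α _ => ?_
      rw [map_mul, eval_C, map_prod]
      refine congrArg _ (Finset.prod_congr rfl fun i _ => ?_)
      rw [map_pow, eval_X]
    apply hQc
    have hfin : eval c (∑ α, C (g α) * ∏ i : ↥(FF S), X (i : Idx n m) ^ (α i : ℕ))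
        * es ^ (N * t) = 0 := by
      rw [hQeval, Finset.sum_mul, ← h0]
      exact Finset.sum_congr rfl fun α _ => by ring
    rcases mul_eq_zero.1 hfin with h | h
    · exact h
    · exact absurd h (pow_ne_zero _ hes0)
end

section
/- For the constant MIMO interference channel in the single beam case: if for a positive measure (equivalently, generic) set of channel matrices H_{kj} in C^{M_r x M_t} (1 <= k, j <= K) there exist nonzero vectors u_k in C^{M_r} and v_k in C^{M_t} satisfying u_k^H H_{kj} v_j = 0 for all k != j, then K(K-1) <= K(M_r + M_t - 2), i.e., K <= M_r + M_t - 1. -/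
open MvPolynomial Finset

open MvPolynomial Finset

/-- Perron-style counting: an algebraically independent family of multivariate
polynomials over `ℚ` in variables `τ` has at most `#τ` members. -/
theorem perron_count {ι τ : Type*} [Fintype ι] [Fintype τ]
    (q : ι → MvPolynomial τ ℚ) (hq : AlgebraicIndependent ℚ q) :
    Fintype.card ι ≤ Fintype.card τ := by
  classical
  by_contra hlt
  push_neg at hlt
  set m := Fintype.card ι with hm
  set n := Fintype.card τ with hn
  have hmn : n + 1 ≤ m := hlt
  set d := Finset.univ.sup (fun i => (q i).totalDegree) with hd
  set c := m * d + 1 with hc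
  set T := c ^ (n + 1) with hT
  set D := m * (T * d) with hD
  -- the family of monomials in the `q i` with exponents `≤ T`
  set expo : (ι → Fin (T + 1)) → (ι →₀ ℕ) :=
    fun f => Finsupp.equivFunOnFinite.symm (fun i => (f i : ℕ)) with hexpo
  have hexpo_inj : Function.Injective expo := by
    intro f g hfg
    funext i
    have := congrArg (fun h => Finsupp.equivFunOnFinite h i) hfg
    simpa [expo, Fin.val_injective.eq_iff] using this
  set G : (ι → Fin (T + 1)) → MvPolynomial τ ℚ :=
    fun f => MvPolynomial.aeval q (monomial (expo f) (1 : ℚ)) with hG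
  -- linear independence of G
  have hGli : LinearIndependent ℚ G := by
    have h1 : LinearIndependent ℚ
        (fun s : ι →₀ ℕ => (monomial s (1 : ℚ) : MvPolynomial ι ℚ)) := by
      have := (basisMonomials ι ℚ).linearIndependent
      rwa [coe_basisMonomials] at this
    have h2 := h1.map' (MvPolynomial.aeval q).toLinearMap
      (LinearMap.ker_eq_bot.2 hq)
    exact h2.comp expo hexpo_inj
  -- degree bound for G
  have hGdeg : ∀ f, (G f).totalDegree ≤ D := by
    intro f
    have h1 : G f = (expo f).prod (fun i k => q i ^ k) := by
      simp only [hG, aeval_monomial, map_one, one_mul]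
    rw [h1, Finsupp.prod]
    refine (totalDegree_finset_prod _ _).trans ?_
    calc ∑ i ∈ (expo f).support, ((q i) ^ (expo f i)).totalDegree
        ≤ ∑ i ∈ (expo f).support, T * d := by
          refine Finset.sum_le_sum (fun i _ => ?_)
          refine (totalDegree_pow _ _).trans ?_
          have h2 : expo f i ≤ T := by
            simp only [expo, Finsupp.equivFunOnFinite_symm_apply_apply]
            exact Nat.lt_succ_iff.mp (f i).2
          exact Nat.mul_le_mul h2 (Finset.le_sup (f := fun i => (q i).totalDegree) (Finset.mem_univ i))
      _ ≤ ∑ _i ∈ (Finset.univ : Finset ι), T * d :=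
          Finset.sum_le_sum_of_subset (Finset.subset_univ _)
      _ = D := by simp [hD, hm, mul_assoc]
  -- the spanning monomials
  set B : Finset (MvPolynomial τ ℚ) :=
    (Finset.univ : Finset (τ → Fin (D + 1))).image
      (fun g => monomial (Finsupp.equivFunOnFinite.symm fun j => (g j : ℕ)) (1 : ℚ)) with hB
  have hspan : ∀ P : MvPolynomial τ ℚ, P.totalDegree ≤ D →
      P ∈ Submodule.span ℚ (B : Set (MvPolynomial τ ℚ)) := by
    intro P hP
    rw [← support_sum_monomial_coeff P]
    refine Submodule.sum_mem _ (fun β hβ => ?_)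
    have hmono : (monomial β (coeff β P) : MvPolynomial τ ℚ)
        = (coeff β P) • monomial β (1 : ℚ) := by
      rw [smul_monomial, smul_eq_mul, mul_one]
    rw [hmono]
    refine Submodule.smul_mem _ _ (Submodule.subset_span ?_)
    have hβle : ∀ j, β j ≤ D := by
      intro j
      refine le_trans ?_ (le_trans (le_totalDegree hβ) hP)
      rw [Finsupp.sum]
      by_cases hj : j ∈ β.support
      · exact Finset.single_le_sum (f := fun a => β a) (fun _ _ => Nat.zero_le _) hj
      · simp [Finsupp.notMem_support_iff.1 hj]
    refine Finset.mem_coe.2 (Finset.mem_image.2 ⟨fun j => ⟨β j, Nat.lt_succ_of_le (hβle j)⟩,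
      Finset.mem_univ _, ?_⟩)
    rw [show (fun j => ((⟨β j, Nat.lt_succ_of_le (hβle j)⟩ : Fin (D + 1)) : ℕ)) = ⇑β from rfl,
      Finsupp.equivFunOnFinite_symm_coe]
  -- put G inside the span
  set V := Submodule.span ℚ (B : Set (MvPolynomial τ ℚ)) with hV
  have : FiniteDimensional ℚ V := FiniteDimensional.span_finset ℚ B
  set G' : (ι → Fin (T + 1)) → V := fun f => ⟨G f, hspan _ (hGdeg f)⟩ with hG'
  have hG'li : LinearIndependent ℚ G' := by
    have hcomp : V.subtype ∘ G' = G := rfl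
    exact LinearIndependent.of_comp V.subtype (by rw [hcomp]; exact hGli)
  have hcard1 : Fintype.card (ι → Fin (T + 1)) ≤ Module.finrank ℚ V :=
    hG'li.fintype_card_le_finrank
  have hcard2 : Module.finrank ℚ V ≤ B.card := finrank_span_finset_le_card B
  have hcard3 : B.card ≤ (D + 1) ^ n := by
    refine (Finset.card_image_le).trans ?_
    simp [hn, Fintype.card_fun]
  have hcard4 : (T + 1) ^ m ≤ (D + 1) ^ n := by
    calc (T + 1) ^ m = Fintype.card (ι → Fin (T + 1)) := by simp [Fintype.card_fun, hm]
      _ ≤ Module.finrank ℚ V := hcard1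
      _ ≤ B.card := hcard2
      _ ≤ (D + 1) ^ n := hcard3
  -- numeric contradiction
  have hT1 : 1 ≤ T := Nat.one_le_pow _ _ (by omega)
  have h5 : D + 1 ≤ c * T := by
    have : D + 1 = m * d * T + 1 := by rw [hD]; ring_nf
    rw [this, hc]
    calc m * d * T + 1 ≤ m * d * T + T := by omega
      _ = (m * d + 1) * T := by ring
  have h6 : (D + 1) ^ n ≤ c ^ (n * (n + 2)) := by
    calc (D + 1) ^ n ≤ (c * T) ^ n := Nat.pow_le_pow_left h5 n
      _ = c ^ n * (c ^ (n + 1)) ^ n := by rw [mul_pow, hT]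
      _ = c ^ (n + (n + 1) * n) := by rw [← pow_mul, ← pow_add]
      _ = c ^ (n * (n + 2)) := by ring_nf
  have h7 : c ^ (n * (n + 2)) < (T + 1) ^ m := by
    have h8 : c ^ (n * (n + 2)) ≤ T ^ (n + 1) := by
      rw [hT, ← pow_mul]
      exact Nat.pow_le_pow_right (by omega) (by nlinarith)
    have h9 : T ^ (n + 1) < (T + 1) ^ (n + 1) :=
      Nat.pow_lt_pow_left (by omega) (by omega)
    have h10 : (T + 1) ^ (n + 1) ≤ (T + 1) ^ m :=
      Nat.pow_le_pow_right (by omega) hmn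
    omega
  omega

/-- An algebraically independent family within a finitely generated
`ℚ`-subalgebra has at most as many members as generators. -/
theorem adjoin_count {A : Type*} [CommRing A] [Algebra ℚ A] {ι τ : Type*}
    [Fintype ι] [Fintype τ] {x : ι → A} (hx : AlgebraicIndependent ℚ x)
    (s : τ → A) (hmem : ∀ i, x i ∈ Algebra.adjoin ℚ (Set.range s)) :
    Fintype.card ι ≤ Fintype.card τ := by
  classical
  have hmem' : ∀ i, ∃ p : MvPolynomial τ ℚ, MvPolynomial.aeval s p = x i := by
    intro i
    have := hmem i
    rw [Algebra.adjoin_range_eq_range_aeval] at this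
    exact this
  choose q hqx using hmem'
  have hcomp : (MvPolynomial.aeval s).comp (MvPolynomial.aeval q)
      = MvPolynomial.aeval x := by
    rw [comp_aeval]
    congr 1
    funext i
    exact hqx i
  have hq : AlgebraicIndependent ℚ q := by
    intro a b hab
    apply hx
    rw [← hcomp]
    simp only [AlgHom.comp_apply, hab]
  exact perron_count q hq

theorem assemble {F : Type*} [Field F] [Algebra ℚ F] {K Mr Mt : ℕ}
    (hh : Fin K × Fin K × Fin Mr × Fin Mt → F)
    (hind : AlgebraicIndependent ℚ hh)
    (W : Fin K → Fin Mr → F) (V : Fin K → Fin Mt → F)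
    (Ak : Fin K → Fin Mr) (Bk : Fin K → Fin Mt)
    (hAk : ∀ k, W k (Ak k) ≠ 0) (hBk : ∀ k, V k (Bk k) ≠ 0)
    (hEq : ∀ k j, k ≠ j →
      ∑ ab : Fin Mr × Fin Mt, W k ab.1 * hh (k, j, ab.1, ab.2) * V j ab.2 = 0)
    (hK : 0 < K) (hMr : 0 < Mr) (hMt : 0 < Mt) : K ≤ Mr + Mt - 1 := by
  classical
  set w : Fin K → Fin Mr → F := fun k a => W k a * (W k (Ak k))⁻¹ with hw
  set xx : Fin K → Fin Mt → F := fun j b => V j b * (V j (Bk j))⁻¹ with hxx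
  have hw1 : ∀ k, w k (Ak k) = 1 := fun k => mul_inv_cancel₀ (hAk k)
  have hx1 : ∀ j, xx j (Bk j) = 1 := fun j => mul_inv_cancel₀ (hBk j)
  have hEq' : ∀ k j, k ≠ j →
      ∑ ab : Fin Mr × Fin Mt, w k ab.1 * hh (k, j, ab.1, ab.2) * xx j ab.2 = 0 := by
    intro k j hkj
    have hterm : ∀ ab : Fin Mr × Fin Mt,
        w k ab.1 * hh (k, j, ab.1, ab.2) * xx j ab.2
          = W k ab.1 * hh (k, j, ab.1, ab.2) * V j ab.2
              * ((W k (Ak k))⁻¹ * (V j (Bk j))⁻¹) := by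
      intro ab; simp only [hw, hxx]; ring
    rw [Finset.sum_congr rfl (fun ab _ => hterm ab), ← Finset.sum_mul, hEq k j hkj, zero_mul]
  -- pivot predicate
  set piv : Fin K × Fin K × Fin Mr × Fin Mt → Prop :=
    fun p => p.1 ≠ p.2.1 ∧ p.2.2.1 = Ak p.1 ∧ p.2.2.2 = Bk p.2.1 with hpiv
  -- generators
  set sfam : ({p : Fin K × Fin K × Fin Mr × Fin Mt // ¬ piv p} ⊕
      ({q : Fin K × Fin Mr // q.2 ≠ Ak q.1} ⊕ {q : Fin K × Fin Mt // q.2 ≠ Bk q.1})) → F :=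
    Sum.elim (fun p => hh p.1)
      (Sum.elim (fun q => w q.1.1 q.1.2) (fun q => xx q.1.1 q.1.2)) with hsfam
  set Adj := Algebra.adjoin ℚ (Set.range sfam) with hAdj
  have hmemw : ∀ k a, w k a ∈ Adj := by
    intro k a
    by_cases ha : a = Ak k
    · rw [ha, hw1]; exact one_mem _
    · exact Algebra.subset_adjoin ⟨Sum.inr (Sum.inl ⟨(k, a), ha⟩), rfl⟩
  have hmemx : ∀ j b, xx j b ∈ Adj := by
    intro j b
    by_cases hb : b = Bk j
    · rw [hb, hx1]; exact one_mem _
    · exact Algebra.subset_adjoin ⟨Sum.inr (Sum.inr ⟨(j, b), hb⟩), rfl⟩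
  have hmem : ∀ p, hh p ∈ Adj := by
    intro p
    by_cases hp : piv p
    · obtain ⟨k, j, a, b⟩ := p
      obtain ⟨h1, h2, h3⟩ := hp
      simp only at h1 h2 h3
      subst h2; subst h3
      have hsplit := Finset.add_sum_erase Finset.univ
        (fun ab : Fin Mr × Fin Mt => w k ab.1 * hh (k, j, ab.1, ab.2) * xx j ab.2)
        (Finset.mem_univ (Ak k, Bk j))
      rw [hEq' k j h1] at hsplit
      have hpvt : hh (k, j, Ak k, Bk j) =
          -∑ ab ∈ Finset.univ.erase (Ak k, Bk j),
            w k ab.1 * hh (k, j, ab.1, ab.2) * xx j ab.2 := by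
        have h2 := eq_neg_of_add_eq_zero_left hsplit
        simp only at h2
        rw [hw1, hx1, one_mul, mul_one] at h2
        exact h2
      rw [hpvt]
      refine neg_mem (Subalgebra.sum_mem _ ?_)
      intro ab hab
      have habne := Finset.ne_of_mem_erase hab
      have hnp : ¬ piv (k, j, ab.1, ab.2) := by
        intro hpv
        exact habne (Prod.ext hpv.2.1 hpv.2.2)
      exact mul_mem (mul_mem (hmemw k ab.1)
        (Algebra.subset_adjoin ⟨Sum.inl ⟨(k, j, ab.1, ab.2), hnp⟩, rfl⟩)) (hmemx j ab.2)
    · exact Algebra.subset_adjoin ⟨Sum.inl ⟨p, hp⟩, rfl⟩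
  have hmain := adjoin_count hind sfam hmem
  -- cardinalities
  have cσ : Fintype.card (Fin K × Fin K × Fin Mr × Fin Mt) = K * K * (Mr * Mt) := by
    simp [Fintype.card_prod, mul_assoc]
  have cpiv : Fintype.card {p : Fin K × Fin K × Fin Mr × Fin Mt // piv p} = K * K - K := by
    have e1 : {p : Fin K × Fin K × Fin Mr × Fin Mt // piv p}
        ≃ {kj : Fin K × Fin K // kj.1 ≠ kj.2} :=
      { toFun := fun p => ⟨(p.1.1, p.1.2.1), p.2.1⟩
        invFun := fun kj => ⟨(kj.1.1, kj.1.2, Ak kj.1.1, Bk kj.1.2), ⟨kj.2, rfl, rfl⟩⟩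
        left_inv := by
          rintro ⟨⟨k, j, a, b⟩, ⟨h1, h2, h3⟩⟩
          simp only at h2 h3
          subst h2; subst h3; rfl
        right_inv := fun kj => rfl }
    have e2 : {kj : Fin K × Fin K // kj.1 = kj.2} ≃ Fin K :=
      { toFun := fun kj => kj.1.1
        invFun := fun k => ⟨(k, k), rfl⟩
        left_inv := by rintro ⟨⟨a, b⟩, h⟩; simp only at h; subst h; rfl
        right_inv := fun k => rfl }
    rw [Fintype.card_congr e1]
    have := Fintype.card_subtype_compl (fun kj : Fin K × Fin K => kj.1 = kj.2)
    rw [Fintype.card_congr e2, Fintype.card_prod, Fintype.card_fin] at this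
    exact this
  have cW : Fintype.card {q : Fin K × Fin Mr // q.2 ≠ Ak q.1} = K * Mr - K := by
    have e2 : {q : Fin K × Fin Mr // q.2 = Ak q.1} ≃ Fin K :=
      { toFun := fun q => q.1.1
        invFun := fun k => ⟨(k, Ak k), rfl⟩
        left_inv := by rintro ⟨⟨k, a⟩, h⟩; simp only at h; subst h; rfl
        right_inv := fun k => rfl }
    have := Fintype.card_subtype_compl (fun q : Fin K × Fin Mr => q.2 = Ak q.1)
    rw [Fintype.card_congr e2, Fintype.card_prod, Fintype.card_fin, Fintype.card_fin] at this
    exact this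
  have cV : Fintype.card {q : Fin K × Fin Mt // q.2 ≠ Bk q.1} = K * Mt - K := by
    have e2 : {q : Fin K × Fin Mt // q.2 = Bk q.1} ≃ Fin K :=
      { toFun := fun q => q.1.1
        invFun := fun k => ⟨(k, Bk k), rfl⟩
        left_inv := by rintro ⟨⟨k, a⟩, h⟩; simp only at h; subst h; rfl
        right_inv := fun k => rfl }
    have := Fintype.card_subtype_compl (fun q : Fin K × Fin Mt => q.2 = Bk q.1)
    rw [Fintype.card_congr e2, Fintype.card_prod, Fintype.card_fin, Fintype.card_fin] at this
    exact this
  have cnp : Fintype.card {p : Fin K × Fin K × Fin Mr × Fin Mt // ¬ piv p}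
      = K * K * (Mr * Mt) - (K * K - K) := by
    have := Fintype.card_subtype_compl piv
    rw [cpiv, cσ] at this
    exact this
  rw [Fintype.card_sum, Fintype.card_sum, cσ, cnp, cW, cV] at hmain
  -- arithmetic
  have hKK : K ≤ K * K := Nat.le_mul_of_pos_left K hK
  have hKMr : K ≤ K * Mr := Nat.le_mul_of_pos_right K hMr
  have hKMt : K ≤ K * Mt := Nat.le_mul_of_pos_right K hMt
  have hKKP : K * K ≤ K * K * (Mr * Mt) :=
    Nat.le_mul_of_pos_right (K * K) (Nat.mul_pos hMr hMt)
  have key : K * K + K ≤ K * Mr + K * Mt := by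
    set P := K * K * (Mr * Mt)
    set A2 := K * K
    set B2 := K * Mr
    set C2 := K * Mt
    omega
  have key2 : K * (K + 1) ≤ K * (Mr + Mt) := by
    rw [Nat.mul_add, Nat.mul_add, mul_one]
    exact key
  have := Nat.le_of_mul_le_mul_left key2 hK
  omega

/-- Constant MIMO IC, single beam: if for a generic (not contained in any proper
algebraic subset) set of channel matrices `H k j ∈ ℂ^{Mr×Mt}` there exist
nonzero beamformers `u k`, `v k` with `uₖᴴ H_{kj} v_j = 0` for all `k ≠ j`,
then `K ≤ Mr + Mt - 1`. -/
theorem stmt_5 (K Mr Mt : ℕ)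
    (h : ∀ Q : MvPolynomial (Fin K × Fin K × Fin Mr × Fin Mt) ℂ, Q ≠ 0 →
      ∃ H : Fin K → Fin K → Matrix (Fin Mr) (Fin Mt) ℂ,
        MvPolynomial.eval (fun p => H p.1 p.2.1 p.2.2.1 p.2.2.2) Q ≠ 0 ∧
        ∃ (u : Fin K → Fin Mr → ℂ) (v : Fin K → Fin Mt → ℂ),
          (∀ k, u k ≠ 0) ∧ (∀ k, v k ≠ 0) ∧
          ∀ k j, k ≠ j →
            dotProduct (star (u k)) (Matrix.mulVec (H k j) (v j)) = 0) :
    K ≤ Mr + Mt - 1 := by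
  classical
  rcases Nat.eq_zero_or_pos K with hK0 | hK
  · omega
  obtain ⟨H1, -, u1, v1, hu1, hv1, -⟩ := h 1 one_ne_zero
  rcases Nat.eq_zero_or_pos Mr with hMr0 | hMr
  · exact absurd (funext fun a : Fin Mr => absurd a.2 (by omega) : u1 ⟨0, hK⟩ = 0)
      (hu1 ⟨0, hK⟩)
  rcases Nat.eq_zero_or_pos Mt with hMt0 | hMt
  · exact absurd (funext fun a : Fin Mt => absurd a.2 (by omega) : v1 ⟨0, hK⟩ = 0)
      (hv1 ⟨0, hK⟩)
  -- index type of nonzero polynomials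
  set ιQ := {Q : MvPolynomial (Fin K × Fin K × Fin Mr × Fin Mt) ℂ // Q ≠ 0} with hιQ
  haveI hne : Nonempty ιQ := ⟨⟨1, one_ne_zero⟩⟩
  choose Hf hHne uf vf huf hvf heqf using fun Q : ιQ => h Q.1 Q.2
  set Aset : ιQ → Set ιQ := fun P =>
    {Q | MvPolynomial.eval (fun p => Hf Q p.1 p.2.1 p.2.2.1 p.2.2.2) P.1 ≠ 0} with hAset
  set filt : Filter ιQ := ⨅ P, Filter.principal (Aset P) with hfilt
  haveI hfne : filt.NeBot := by
    refine Filter.iInf_neBot_of_directed ?_ ?_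
    · intro P1 P2
      refine ⟨⟨P1.1 * P2.1, mul_ne_zero P1.2 P2.2⟩, ?_, ?_⟩ <;>
        refine Filter.principal_mono.2 (fun Q hQ => ?_) <;>
        simp only [hAset, Set.mem_setOf_eq] at hQ ⊢
      · intro h0
        exact hQ (by rw [map_mul, h0, zero_mul])
      · intro h0
        exact hQ (by rw [map_mul, h0, mul_zero])
    · intro P
      refine Filter.principal_neBot_iff.2 ⟨P, ?_⟩
      rw [hAset]
      exact hHne P
  set U := Ultrafilter.of filt with hUdef
  have hUA : ∀ P, Aset P ∈ (U : Filter ιQ) := fun P =>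
    Ultrafilter.of_le filt (by rw [hfilt]; exact Filter.mem_iInf_of_mem P (Filter.mem_principal_self _))
  haveI : CharZero (Filter.Germ (U : Filter ιQ) ℂ) := by
    refine charZero_of_injective_ringHom
      (f := (Filter.Germ.coeRingHom (U : Filter ιQ)).comp (Pi.constRingHom ιQ ℂ)) ?_
    intro a b hab
    exact Filter.Germ.const_inj.1 hab
  set π : (ιQ → ℂ) →+* Filter.Germ (U : Filter ιQ) ℂ :=
    Filter.Germ.coeRingHom (U : Filter ιQ) with hπ
  -- zero criterion
  have hzero : ∀ g : ιQ → ℂ, π g = 0 ↔ {Q | g Q = 0} ∈ (U : Filter ιQ) := by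
    intro g
    have h1 : (π g = π 0) ↔ g =ᶠ[(U : Filter ιQ)] 0 := Filter.Germ.coe_eq
    rw [map_zero] at h1
    exact h1
  -- the algebra hom version of π
  have hcommutes : ∀ c : ℚ, π ((algebraMap ℚ (ιQ → ℂ)) c)
      = algebraMap ℚ (Filter.Germ (U : Filter ιQ) ℂ) c := by
    intro c
    have h1 : (π.comp (algebraMap ℚ (ιQ → ℂ))) c = ((c : ℚ) : Filter.Germ (U : Filter ιQ) ℂ) :=
      eq_ratCast _ c
    have h2 : (algebraMap ℚ (Filter.Germ (U : Filter ιQ) ℂ)) c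
        = ((c : ℚ) : Filter.Germ (U : Filter ιQ) ℂ) := eq_ratCast _ c
    rw [h2]
    exact h1
  set πA : (ιQ → ℂ) →ₐ[ℚ] Filter.Germ (U : Filter ιQ) ℂ :=
    { toRingHom := π, commutes' := hcommutes } with hπA
  set hfun : (Fin K × Fin K × Fin Mr × Fin Mt) → (ιQ → ℂ) :=
    fun p Q => Hf Q p.1 p.2.1 p.2.2.1 p.2.2.2 with hhfun
  set hh : (Fin K × Fin K × Fin Mr × Fin Mt) → Filter.Germ (U : Filter ιQ) ℂ :=
    fun p => π (hfun p) with hhh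
  -- algebraic independence of hh
  have hcomp : ∀ r : MvPolynomial (Fin K × Fin K × Fin Mr × Fin Mt) ℚ,
      MvPolynomial.aeval hh r = πA (MvPolynomial.aeval hfun r) := by
    intro r
    have h1 : πA.comp (MvPolynomial.aeval hfun) = MvPolynomial.aeval hh := by
      rw [MvPolynomial.comp_aeval]
      rfl
    rw [← h1, AlgHom.comp_apply]
  have hpt : ∀ (r : MvPolynomial (Fin K × Fin K × Fin Mr × Fin Mt) ℚ) (Q : ιQ),
      (MvPolynomial.aeval hfun r) Q
        = MvPolynomial.eval (fun p => Hf Q p.1 p.2.1 p.2.2.1 p.2.2.2)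
            (MvPolynomial.map (algebraMap ℚ ℂ) r) := by
    intro r Q
    have h1 : (Pi.evalAlgHom ℚ (fun _ : ιQ => ℂ) Q).comp (MvPolynomial.aeval hfun)
        = MvPolynomial.aeval (fun p => hfun p Q) := by
      rw [MvPolynomial.comp_aeval]; rfl
    calc (MvPolynomial.aeval hfun r) Q
        = (Pi.evalAlgHom ℚ (fun _ : ιQ => ℂ) Q) (MvPolynomial.aeval hfun r) := rfl
      _ = MvPolynomial.aeval (fun p => hfun p Q) r := by rw [← h1, AlgHom.comp_apply]
      _ = MvPolynomial.eval (fun p => hfun p Q) (MvPolynomial.map (algebraMap ℚ ℂ) r) := by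
          rw [MvPolynomial.eval_map, MvPolynomial.aeval_def]
  have hind : AlgebraicIndependent ℚ hh := by
    rw [algebraicIndependent_iff]
    intro r hr
    by_contra hr0
    have hmapne : MvPolynomial.map (algebraMap ℚ ℂ) r ≠ 0 := by
      intro hz
      exact hr0 (MvPolynomial.map_injective _ (algebraMap ℚ ℂ).injective
        (by rw [hz, map_zero]))
    set P : ιQ := ⟨MvPolynomial.map (algebraMap ℚ ℂ) r, hmapne⟩ with hP
    have h1 : π (fun Q => MvPolynomial.eval
        (fun p => Hf Q p.1 p.2.1 p.2.2.1 p.2.2.2) P.1) = 0 := by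
      have h2 : (fun Q => MvPolynomial.eval
          (fun p => Hf Q p.1 p.2.1 p.2.2.1 p.2.2.2) P.1) = MvPolynomial.aeval hfun r :=
        funext fun Q => by rw [hpt r Q]
      rw [h2, show π (MvPolynomial.aeval hfun r) = πA (MvPolynomial.aeval hfun r) from rfl,
        ← hcomp r, hr]
    rw [hzero] at h1
    have h4 := Filter.inter_mem h1 (hUA P)
    obtain ⟨Q, hQ⟩ := Filter.nonempty_of_mem h4
    exact hQ.2 hQ.1
  -- pivots
  have hWex : ∀ k, ∃ a, π (fun Q => (starRingEnd ℂ) (uf Q k a)) ≠ 0 := by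
    intro k
    by_contra hno
    push_neg at hno
    have h1 : ∀ᶠ Q in (U : Filter ιQ), ∀ a, (starRingEnd ℂ) (uf Q k a) = 0 :=
      Filter.eventually_all.2 (fun a => (hzero _).1 (hno a))
    obtain ⟨Q, hQ⟩ := h1.exists
    refine huf Q k (funext fun a => ?_)
    have := hQ a
    simpa using this
  have hVex : ∀ j, ∃ b, π (fun Q => vf Q j b) ≠ 0 := by
    intro j
    by_contra hno
    push_neg at hno
    have h1 : ∀ᶠ Q in (U : Filter ιQ), ∀ b, vf Q j b = 0 :=
      Filter.eventually_all.2 (fun b => (hzero _).1 (hno b))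
    obtain ⟨Q, hQ⟩ := h1.exists
    exact hvf Q j (funext fun b => hQ b)
  choose Ak hAk using hWex
  choose Bk hBk using hVex
  -- the equations
  have hEqF : ∀ k j, k ≠ j →
      ∑ ab : Fin Mr × Fin Mt,
        (π fun Q => (starRingEnd ℂ) (uf Q k ab.1)) * hh (k, j, ab.1, ab.2)
          * (π fun Q => vf Q j ab.2) = 0 := by
    intro k j hkj
    have hfe : (fun Q => ∑ ab : Fin Mr × Fin Mt,
        (starRingEnd ℂ) (uf Q k ab.1) * Hf Q k j ab.1 ab.2 * vf Q j ab.2)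
        = (0 : ιQ → ℂ) := by
      funext Q
      have h0 := heqf Q k j hkj
      simp only [dotProduct, Matrix.mulVec, Pi.star_apply] at h0
      rw [Fintype.sum_prod_type]
      simp only [Pi.zero_apply]
      calc ∑ a, ∑ b, (starRingEnd ℂ) (uf Q k a) * Hf Q k j a b * vf Q j b
          = ∑ a, star (uf Q k a) * ∑ b, Hf Q k j a b * vf Q j b := by
            refine Finset.sum_congr rfl (fun a _ => ?_)
            rw [Finset.mul_sum]
            refine Finset.sum_congr rfl (fun b _ => ?_)
            rw [starRingEnd_apply, mul_assoc]
        _ = 0 := h0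
    have h2 : ∀ ab : Fin Mr × Fin Mt,
        (π fun Q => (starRingEnd ℂ) (uf Q k ab.1)) * hh (k, j, ab.1, ab.2)
            * (π fun Q => vf Q j ab.2)
          = π (fun Q => (starRingEnd ℂ) (uf Q k ab.1) * Hf Q k j ab.1 ab.2 * vf Q j ab.2) := by
      intro ab
      rw [← map_mul, ← map_mul]
      rfl
    rw [Finset.sum_congr rfl (fun ab _ => h2 ab), ← map_sum]
    have h3 : (∑ ab : Fin Mr × Fin Mt,
        fun Q => (starRingEnd ℂ) (uf Q k ab.1) * Hf Q k j ab.1 ab.2 * vf Q j ab.2)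
        = (fun Q => ∑ ab : Fin Mr × Fin Mt,
            (starRingEnd ℂ) (uf Q k ab.1) * Hf Q k j ab.1 ab.2 * vf Q j ab.2) := by
      funext Q
      simp [Finset.sum_apply]
    rw [h3, hfe, map_zero]
  exact assemble hh hind
    (fun k a => π (fun Q => (starRingEnd ℂ) (uf Q k a)))
    (fun j b => π (fun Q => vf Q j b)) Ak Bk hAk hBk hEqF hK hMr hMt
end

section
/- Lifting lemma (L = 2 case): Let A_1, A_2 be complex N_r-by-N matrices, and for 1 <= i, j <= K let H_{ij} = A_1 + tau_{ij} A_2 with tau_{ij} in C. If nonzero vectors v_1,...,v_K in C^N satisfy, for each k, that H_{kk} v_k is not in the span of {H_{kj} v_j : j != k}, then for each k the stacked vector (v_k; tau_{kk} v_k) in C^{2N} is not in the span of {(v_j; tau_{kj} v_j) : j != k}. -/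
/-- Lifting lemma (`L = 2`): for channels `H i j = A₁ + τ i j • A₂`, if each
`H k k *ᵥ v k` is outside the span of the interfering `H k j *ᵥ v j` (`j ≠ k`),
then each stacked vector `(v k ; τ k k • v k)` is outside the span of the
stacked vectors `(v j ; τ k j • v j)`, `j ≠ k`. -/
theorem stmt_9 (K N Nr : ℕ) (A₁ A₂ : Matrix (Fin Nr) (Fin N) ℂ)
    (τ : Fin K → Fin K → ℂ) (H : Fin K → Fin K → Matrix (Fin Nr) (Fin N) ℂ)
    (hH : ∀ i j, H i j = A₁ + τ i j • A₂)
    (v : Fin K → Fin N → ℂ) (hv : ∀ k, v k ≠ 0)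
    (h : ∀ k, Matrix.mulVec (H k k) (v k) ∉
      Submodule.span ℂ (Set.range fun j : {j : Fin K // j ≠ k} =>
        Matrix.mulVec (H k j.1) (v j.1))) :
    ∀ k, (Sum.elim (v k) (τ k k • v k) : Fin N ⊕ Fin N → ℂ) ∉
      Submodule.span ℂ (Set.range fun j : {j : Fin K // j ≠ k} =>
        (Sum.elim (v j.1) (τ k j.1 • v j.1) : Fin N ⊕ Fin N → ℂ)) := by
  intro k hk
  apply h k
  set T : ((Fin N ⊕ Fin N) → ℂ) →ₗ[ℂ] (Fin Nr → ℂ) :=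
    (Matrix.mulVecLin A₁).comp (LinearMap.funLeft ℂ ℂ Sum.inl) +
    (Matrix.mulVecLin A₂).comp (LinearMap.funLeft ℂ ℂ Sum.inr) with hT
  have key : ∀ (i : Fin K) (c : ℂ) (x : Fin N → ℂ),
      T (Sum.elim x (c • x)) = Matrix.mulVec (A₁ + c • A₂) x := by
    intro i c x
    simp only [hT, LinearMap.add_apply, LinearMap.comp_apply, Matrix.mulVecLin_apply,
      LinearMap.funLeft_apply, Matrix.add_mulVec, Matrix.smul_mulVec]
    congr 1
    rw [show (LinearMap.funLeft ℂ ℂ Sum.inr) (Sum.elim x (c • x)) = c • x from rfl, Matrix.mulVec_smul]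
  have hmem : T (Sum.elim (v k) (τ k k • v k)) ∈
      Submodule.map T (Submodule.span ℂ (Set.range fun j : {j : Fin K // j ≠ k} =>
        (Sum.elim (v j.1) (τ k j.1 • v j.1) : Fin N ⊕ Fin N → ℂ))) :=
    Submodule.mem_map_of_mem hk
  rw [Submodule.map_span, ← Set.range_comp] at hmem
  have heq : (T ∘ fun j : {j : Fin K // j ≠ k} =>
      (Sum.elim (v j.1) (τ k j.1 • v j.1) : Fin N ⊕ Fin N → ℂ)) =
      fun j : {j : Fin K // j ≠ k} => Matrix.mulVec (H k j.1) (v j.1) := by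
    funext j
    simp only [Function.comp_apply, key k (τ k j.1) (v j.1), hH]
  rw [heq, key k (τ k k) (v k), ← hH] at hmem
  exact hmem
end

section
/- Claim on maximal subspace dimension (general L): Suppose u_k^t = gamma_t * u_k^L for t = 1,...,L-1 with u_k^L in C^N nonzero, and for each j != k the equation sum_{l=1}^L tau_{kj}^l (u_k^l)^H v_j = 0 holds. Let Omega_k^c = {j != k : (u_k^L)^H v_j != 0}. If for every j in Omega_k^c the vector (tau_{kj}^1, ..., tau_{kj}^L) satisfies gamma_1^* tau_{kj}^1 + ... + gamma_{L-1}^* tau_{kj}^{L-1} + tau_{kj}^L = 0, and if the vectors (tau_{kj}^l)_{l=1..L}, j in Omega_k^c, are in general position (no L of them satisfy a common nontrivial linear relation with last coordinate 1 unless forced), then |Omega_k^c| <= L - 1, and hence K <= |Omega_k| + L where Omega_k is the complement of Omega_k^c in {1,...,K} \ {k}. -/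
/-- Maximal-subspace claim (general `L`): suppose `u l = γ l • uL` with
`γ (L-1) = 1` and `uL ≠ 0`, the zero-forcing equations hold, every `j` in
`Ωᶜ = {j ≠ k : uLᴴ v j ≠ 0}` satisfies `∑ l, γ l * τ j l = 0`, and the vectors
`(τ j l)_l`, `j ∈ Ωᶜ`, are in general position (any `L` of them are linearly
independent). Then `|Ωᶜ| ≤ L - 1` and `K ≤ |Ω_k| + L`. -/
theorem stmt_14 (K N L : ℕ) (hL : 1 ≤ L) (k : Fin K)
    (γ : Fin L → ℂ) (uL : Fin N → ℂ) (huL : uL ≠ 0)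
    (u : Fin L → Fin N → ℂ) (hu : ∀ l, u l = γ l • uL)
    (hγlast : γ ⟨L - 1, by omega⟩ = 1)
    (v : Fin K → Fin N → ℂ) (τ : Fin K → Fin L → ℂ)
    (hzf : ∀ j, j ≠ k → ∑ l, τ j l * ∑ i, (starRingEnd ℂ) (u l i) * v j i = 0)
    (Ωc : Set (Fin K))
    (hΩc : Ωc = {j | j ≠ k ∧ (∑ i, (starRingEnd ℂ) (uL i) * v j i) ≠ 0})
    (horth : ∀ j ∈ Ωc, ∑ l, (starRingEnd ℂ) (γ l) * τ j l = 0)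
    (hgp : ∀ s : Finset (Fin K), ↑s ⊆ Ωc → s.card = L →
      LinearIndependent ℂ (fun j : {x // x ∈ s} => τ j.1)) :
    Ωc.ncard ≤ L - 1 ∧ K ≤ {j : Fin K | j ≠ k ∧ j ∉ Ωc}.ncard + L := by
  classical
  -- the linear functional x ↦ ∑ l, star (γ l) * x l
  let φ : (Fin L → ℂ) →ₗ[ℂ] ℂ :=
    { toFun := fun x => ∑ l, (starRingEnd ℂ) (γ l) * x l
      map_add' := by
        intro x y; simp [mul_add, Finset.sum_add_distrib]
      map_smul' := by
        intro c x; simp [Finset.mul_sum, mul_left_comm] }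
  have hmain : Ωc.ncard ≤ L - 1 := by
    by_contra h
    push_neg at h
    have hLle : L ≤ Ωc.ncard := by omega
    obtain ⟨t, hts, ht⟩ := Set.exists_subset_card_eq hLle
    have htfin : t.Finite := Set.finite_univ.subset (Set.subset_univ t) |>.subset (by simp)
    -- t is a finite set in Fin K
    have htfin' : t.Finite := Set.toFinite t
    set s : Finset (Fin K) := htfin'.toFinset with hs
    have hscard : s.card = L := by
      rw [hs, ← Set.ncard_eq_toFinset_card t htfin', ht]
    have hssub : (↑s : Set (Fin K)) ⊆ Ωc := by
      simpa [hs] using hts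
    have li := hgp s hssub hscard
    have hne : s.Nonempty := Finset.card_pos.mp (by omega)
    haveI : Nonempty {x // x ∈ s} := ⟨⟨hne.choose, hne.choose_spec⟩⟩
    have hcard : Fintype.card {x // x ∈ s} = Module.finrank ℂ (Fin L → ℂ) := by
      simp [Module.finrank_fin_fun, hscard]
    have hspan := li.span_eq_top_of_card_eq_finrank hcard
    have hφ0 : φ = 0 := by
      apply LinearMap.ext_on_range hspan
      intro j
      have := horth j.1 (hssub j.2)
      simpa [φ] using this
    have : φ (Pi.single ⟨L - 1, by omega⟩ 1) = 0 := by rw [hφ0]; rfl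
    simp [φ, Pi.single_apply, Finset.sum_ite_eq', hγlast] at this
  refine ⟨hmain, ?_⟩
  have hsub : (Set.univ : Set (Fin K)) ⊆ {k} ∪ (Ωc ∪ {j : Fin K | j ≠ k ∧ j ∉ Ωc}) := by
    intro j _
    by_cases hjk : j = k
    · exact Or.inl hjk
    · by_cases hjΩ : j ∈ Ωc
      · exact Or.inr (Or.inl hjΩ)
      · exact Or.inr (Or.inr ⟨hjk, hjΩ⟩)
  have hK : K = (Set.univ : Set (Fin K)).ncard := by simp [Set.ncard_univ]
  calc K = (Set.univ : Set (Fin K)).ncard := hK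
    _ ≤ ({k} ∪ (Ωc ∪ {j : Fin K | j ≠ k ∧ j ∉ Ωc})).ncard :=
        Set.ncard_le_ncard hsub (Set.toFinite _)
    _ ≤ ({k} : Set (Fin K)).ncard + (Ωc ∪ {j : Fin K | j ≠ k ∧ j ∉ Ωc}).ncard :=
        Set.ncard_union_le _ _
    _ ≤ 1 + (Ωc.ncard + {j : Fin K | j ≠ k ∧ j ∉ Ωc}.ncard) := by
        simp; exact Set.ncard_union_le _ _
    _ ≤ 1 + ((L - 1) + {j : Fin K | j ≠ k ∧ j ∉ Ωc}.ncard) := by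
        omega
    _ ≤ {j : Fin K | j ≠ k ∧ j ∉ Ωc}.ncard + L := by omega
end
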